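/- Let F be a continuous distribution function with F(0) = 0. For z with F(z) < 1, ∫_{(0,z]} (∫_{(0,y]} dF(u)/(1−F(u))^2) dF(y)/( (1−F(y)) ) ≤ ∫_{(0,z]} dF(y)/(1−F(y))^2, using ∫_{(0,y]} dF(u)/(1−F(u))^2 ≤ 1/(1−F(y)). -/

import Mathlib

open MeasureTheory Set Filter
open scoped ENNReal

section Aux

variable {μ : Measure ℝ} [IsProbabilityMeasure μ] {F : ℝ → ℝ}

lemma cdf_mono (hF : ∀ x, F x = (μ (Iic x)).toReal) : Monotone F := by
  intro a b hab
  rw [hF a, hF b]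
  exact ENNReal.toReal_mono (measure_ne_top μ _) (measure_mono (Iic_subset_Iic.2 hab))

lemma cdf_nonneg (hF : ∀ x, F x = (μ (Iic x)).toReal) (x : ℝ) : 0 ≤ F x := by
  rw [hF x]; exact ENNReal.toReal_nonneg

lemma cdf_le_one (hF : ∀ x, F x = (μ (Iic x)).toReal) (x : ℝ) : F x ≤ 1 := by
  rw [hF x]
  have : μ (Iic x) ≤ 1 := prob_le_one
  exact ENNReal.toReal_le_of_le_ofReal zero_le_one (by simpa using this)

lemma cdf_tendsto (hF : ∀ x, F x = (μ (Iic x)).toReal) :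
    Tendsto F atTop (nhds 1) := by
  have h := tendsto_measure_Iic_atTop (μ := μ)
  rw [measure_univ] at h
  have h2 := (ENNReal.tendsto_toReal (by norm_num : (1 : ℝ≥0∞) ≠ ⊤)).comp h
  have hFeq : F = fun x => (μ (Iic x)).toReal := funext hF
  rw [hFeq]
  exact h2

/-- The set `{x | F x ≤ t}` has measure `t` for `t ∈ [0,1)`. -/
lemma measure_cdf_le (hF : ∀ x, F x = (μ (Iic x)).toReal)
    (hFcont : Continuous F) (hF0 : F 0 = 0) {t : ℝ} (ht0 : 0 ≤ t) (ht1 : t < 1) :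
    μ {x | F x ≤ t} = ENNReal.ofReal t := by
  have hmono := cdf_mono hF
  set S : Set ℝ := {x | F x ≤ t} with hS
  have hne : S.Nonempty := ⟨0, by simp [hS, hF0, ht0]⟩
  obtain ⟨b, hb⟩ : ∃ b, t < F b := by
    have := (cdf_tendsto hF).eventually (eventually_gt_nhds ht1)
    exact this.exists
  have hbdd : BddAbove S := by
    refine ⟨b, fun x hx => ?_⟩
    by_contra hxb
    push_neg at hxb
    exact absurd (le_trans (hmono hxb.le) hx) (not_le.2 hb)
  set c := sSup S with hc
  have hSc : IsClosed S := isClosed_le hFcont continuous_const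
  have hcS : c ∈ S := hSc.csSup_mem hne hbdd
  have hSeq : S = Iic c := by
    ext x
    constructor
    · exact fun hx => le_csSup hbdd hx
    · exact fun hx => le_trans (hmono hx) hcS
  have hFc : F c = t := by
    rcases lt_or_eq_of_le (show F c ≤ t from hcS) with h | h
    · exfalso
      have : ∀ᶠ x in nhds c, F x < t := hFcont.continuousAt.eventually_lt continuous_const.continuousAt h
      obtain ⟨ε, hε, hball⟩ := Metric.eventually_nhds_iff.1 this
      have hmem : c + ε / 2 ∈ S := by
        have hlt : F (c + ε / 2) < t := by
          apply hball
          rw [Real.dist_eq]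
          rw [show c + ε / 2 - c = ε / 2 by ring, abs_of_pos (half_pos hε)]
          linarith
        exact hlt.le
      have := le_csSup hbdd hmem
      linarith
    · exact h
  rw [hSeq]
  have : μ (Iic c) = ENNReal.ofReal ((μ (Iic c)).toReal) :=
    (ENNReal.ofReal_toReal (measure_ne_top μ _)).symm
  rw [this, ← hF c, hFc]

/-- The pushforward of `μ` under its continuous CDF is uniform on `(0,1]`. -/
lemma map_cdf (hF : ∀ x, F x = (μ (Iic x)).toReal)
    (hFcont : Continuous F) (hF0 : F 0 = 0) :
    μ.map F = volume.restrict (Ioc 0 1) := by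
  have hmeas : Measurable F := hFcont.measurable
  have : IsFiniteMeasure (μ.map F) := by
    constructor
    rw [Measure.map_apply hmeas MeasurableSet.univ]
    simp
  refine MeasureTheory.Measure.ext_of_Iic (μ.map F) _ (fun a => ?_)
  rw [Measure.map_apply hmeas measurableSet_Iic,
    Measure.restrict_apply' (by measurability)]
  rcases lt_or_ge a 0 with ha | ha
  · have h1 : F ⁻¹' Iic a = ∅ := by
      ext x
      simp only [mem_preimage, mem_Iic, mem_empty_iff_false, iff_false, not_le]
      exact lt_of_lt_of_le ha (cdf_nonneg hF x)
    have h2 : Iic a ∩ Ioc 0 1 = ∅ := by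
      ext x; simp only [mem_inter_iff, mem_Iic, mem_Ioc, mem_empty_iff_false, iff_false]
      rintro ⟨h1, h2, _⟩; linarith
    simp [h1, h2]
  rcases lt_or_ge a 1 with ha1 | ha1
  · have h2 : Iic a ∩ Ioc 0 1 = Ioc 0 a := by
      ext x; simp only [mem_inter_iff, mem_Iic, mem_Ioc]
      constructor
      · rintro ⟨h1, h2, h3⟩; exact ⟨h2, h1⟩
      · rintro ⟨h1, h2⟩; exact ⟨h2, h1, le_trans h2 ha1.le⟩
    rw [h2, Real.volume_Ioc]
    have := measure_cdf_le hF hFcont hF0 ha ha1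
    simpa using (by exact this : μ (F ⁻¹' Iic a) = ENNReal.ofReal a)
  · have h1 : F ⁻¹' Iic a = univ := by
      ext x; simp only [mem_preimage, mem_Iic, mem_univ, iff_true]
      exact le_trans (cdf_le_one hF x) ha1
    have h2 : Iic a ∩ Ioc 0 1 = Ioc 0 1 := by
      rw [inter_eq_right]
      exact fun x hx => le_trans hx.2 ha1
    rw [h1, h2, Real.volume_Ioc]
    simp

/-- Inner bound: `∫_{(0,y]} dF/(1-F)² ≤ 1/(1-F y) - 1`. -/
lemma inner_bound (hF : ∀ x, F x = (μ (Iic x)).toReal)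
    (hFcont : Continuous F) (hF0 : F 0 = 0) {y : ℝ} (hy : F y < 1) :
    ∫ u in Ioc 0 y, 1 / (1 - F u)^2 ∂μ ≤ 1 / (1 - F y) - 1 := by
  have hmeas : Measurable F := hFcont.measurable
  have hmono := cdf_mono hF
  set ψ : ℝ → ℝ := (Icc 0 (F y)).indicator (fun t => 1 / (1 - t)^2) with hψ
  have hψmeas : Measurable ψ := by
    apply Measurable.indicator _ measurableSet_Icc
    exact (measurable_const.div ((measurable_const.sub measurable_id).pow_const 2))
  have hψnonneg : ∀ t, 0 ≤ ψ t := by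
    intro t
    apply Set.indicator_nonneg
    intro t _
    positivity
  have hψbdd : ∀ t, ψ t ≤ 1 / (1 - F y)^2 := by
    intro t
    rw [hψ]
    by_cases h : t ∈ Icc 0 (F y)
    · rw [indicator_of_mem h]
      apply one_div_le_one_div_of_le
      · exact pow_pos (by linarith) 2
      · apply pow_le_pow_left₀ (by linarith [h.2]) (by linarith [h.2])
    · rw [indicator_of_notMem h]; positivity
  -- pointwise bound
  have hpt : ∀ u, (Ioc 0 y).indicator (fun u => 1 / (1 - F u)^2) u ≤ ψ (F u) := by
    intro u
    by_cases h : u ∈ Ioc 0 y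
    · rw [indicator_of_mem h]
      have hFu : F u ∈ Icc 0 (F y) := ⟨cdf_nonneg hF u, hmono h.2⟩
      rw [hψ, indicator_of_mem hFu]
    · rw [indicator_of_notMem h]
      exact hψnonneg _
  have hint1 : Integrable (fun u => ψ (F u)) μ := by
    apply Integrable.mono' (integrable_const (1 / (1 - F y)^2)) (hψmeas.comp hmeas).aestronglyMeasurable
    filter_upwards with u
    simp only [Function.comp_apply, Real.norm_eq_abs, abs_of_nonneg (hψnonneg _)]
    exact hψbdd _
  have step1 : ∫ u in Ioc 0 y, 1 / (1 - F u)^2 ∂μ ≤ ∫ u, ψ (F u) ∂μ := by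
    rw [← integral_indicator measurableSet_Ioc]
    apply integral_mono_of_nonneg _ hint1 (Filter.Eventually.of_forall hpt)
    filter_upwards with u
    apply indicator_nonneg
    intro x _
    positivity
  have step2 : ∫ u, ψ (F u) ∂μ = ∫ t, ψ t ∂(μ.map F) := by
    rw [integral_map hmeas.aemeasurable hψmeas.aestronglyMeasurable]
  have step3 : ∫ t, ψ t ∂(μ.map F) = ∫ t in Ioc 0 (F y), 1 / (1 - t)^2 := by
    rw [map_cdf hF hFcont hF0, integral_indicator measurableSet_Icc,
      Measure.restrict_restrict measurableSet_Icc]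
    have : Icc 0 (F y) ∩ Ioc 0 1 = Ioc 0 (F y) := by
      ext x; simp only [mem_inter_iff, mem_Icc, mem_Ioc]
      constructor
      · rintro ⟨⟨h1, h2⟩, h3, h4⟩; exact ⟨h3, h2⟩
      · rintro ⟨h1, h2⟩; exact ⟨⟨h1.le, h2⟩, h1, le_trans h2 hy.le⟩
    rw [this]
  have hFy0 : (0:ℝ) ≤ F y := cdf_nonneg hF y
  have step4 : ∫ t in Ioc 0 (F y), 1 / (1 - t)^2 = 1 / (1 - F y) - 1 := by
    rw [← intervalIntegral.integral_of_le hFy0]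
    have : ∫ t in (0:ℝ)..(F y), 1 / (1 - t)^2 = (1 - F y)⁻¹ - (1 - (0:ℝ))⁻¹ := by
      apply intervalIntegral.integral_eq_sub_of_hasDerivAt (f := fun t : ℝ => (1 - t)⁻¹)
      · intro x hx
        rw [uIcc_of_le hFy0] at hx
        have hx1 : 1 - x ≠ 0 := by
          have := hx.2
          intro h
          have : x = 1 := by linarith
          linarith [this ▸ hx.2, hy]
        have : HasDerivAt (fun t : ℝ => (1 - t)⁻¹) (-(-1) / (1 - x)^2) x := by
          have h1 : HasDerivAt (fun t : ℝ => 1 - t) (-1) x := by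
            simpa using (hasDerivAt_id x).const_sub 1
          simpa [Pi.inv_def] using h1.inv hx1
        simpa [one_div] using this
      · apply ContinuousOn.intervalIntegrable
        apply ContinuousOn.div continuousOn_const
        · exact ((continuousOn_const.sub continuousOn_id).pow 2)
        · intro x hx
          rw [uIcc_of_le hFy0] at hx
          have hx2 : x ≤ F y := hx.2
          have : 1 - x ≠ 0 := by intro h; nlinarith
          positivity
    rw [this]
    simp [one_div]
  linarith [step1, step2 ▸ step1, step3, step4, step2]

end Aux

/-- The double-integral bound of Lemma 3.9:
`∫_{(0,z]} (∫_{(0,y]} dF/(1−F)²) dF(y)/(1−F(y)) ≤ ∫_{(0,z]} dF/(1−F)²`. -/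
theorem double_integral_hazard_bound
    (μ : Measure ℝ) [IsProbabilityMeasure μ]
    (F : ℝ → ℝ) (hF : ∀ x, F x = (μ (Iic x)).toReal)
    (hFcont : Continuous F) (hF0 : F 0 = 0) :
    ∀ z : ℝ, F z < 1 →
      (∫ y in Ioc 0 z, (∫ u in Ioc 0 y, 1 / (1 - F u)^2 ∂μ) * (1 / (1 - F y)) ∂μ)
        ≤ ∫ y in Ioc 0 z, 1 / (1 - F y)^2 ∂μ := by
  intro z hz
  have hmono := cdf_mono hF
  have hmeas : Measurable F := hFcont.measurable
  -- integrability of RHS integrand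
  have hRHSint : Integrable (fun y => 1 / (1 - F y)^2) (μ.restrict (Ioc 0 z)) := by
    apply Integrable.mono' (integrable_const (1 / (1 - F z)^2))
    · exact (measurable_const.div ((measurable_const.sub hmeas).pow_const 2)).aestronglyMeasurable
    · filter_upwards [ae_restrict_mem measurableSet_Ioc] with y hy
      have hFy : F y ≤ F z := hmono hy.2
      rw [Real.norm_eq_abs, abs_of_nonneg (by positivity)]
      apply one_div_le_one_div_of_le
      · nlinarith
      · apply pow_le_pow_left₀ (by linarith) (by linarith)
  apply integral_mono_of_nonneg _ hRHSint
  · filter_upwards [ae_restrict_mem measurableSet_Ioc] with y hy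
    have hFy : F y ≤ F z := hmono hy.2
    have hFy1 : F y < 1 := lt_of_le_of_lt hFy hz
    have h1 : ∫ u in Ioc 0 y, 1 / (1 - F u)^2 ∂μ ≤ 1 / (1 - F y) - 1 :=
      inner_bound hF hFcont hF0 hFy1
    have h2 : (0:ℝ) < 1 - F y := by linarith
    calc (∫ u in Ioc 0 y, 1 / (1 - F u)^2 ∂μ) * (1 / (1 - F y))
        ≤ (1 / (1 - F y) - 1) * (1 / (1 - F y)) := by
          apply mul_le_mul_of_nonneg_right h1 (by positivity)
      _ ≤ (1 / (1 - F y)) * (1 / (1 - F y)) := by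
          apply mul_le_mul_of_nonneg_right _ (by positivity)
          linarith
      _ = 1 / (1 - F y)^2 := by
          rw [div_mul_div_comm, one_mul, sq]
  · filter_upwards [ae_restrict_mem measurableSet_Ioc] with y hy
    have hFy1 : (0:ℝ) < 1 - F y := by linarith [lt_of_le_of_lt (hmono hy.2) hz]
    apply mul_nonneg
    · apply integral_nonneg
      intro u
      positivity
    · positivity
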